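/- (KKT characterization of the optimal controller) Let r: ℝ^m → ℝ and p: ℝⁿ → ℝ be differentiable strictly convex functions, A ∈ ℝ^{n×n} invertible, B ∈ ℝ^{n×m}, M symmetric. If u* minimizes u ↦ r(u) + p(Ax + Bu) and the envelope condition Aᵀ∇p(Ax + Bu*) = 2Mx holds, then u* = ∇r*(−2 Bᵀ A^{-T} M x), where r* is the Fenchel conjugate of r. -/

import Mathlib

open RealInnerProductSpace Matrix

noncomputable def fenchelConj {n : ℕ} (f : EuclideanSpace ℝ (Fin n) → ℝ)
    (y : EuclideanSpace ℝ (Fin n)) : ℝ :=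
  ⨆ x, (⟪x, y⟫ - f x)

theorem kkt_optimal_controller {n m : ℕ}
    (r : EuclideanSpace ℝ (Fin m) → ℝ) (p : EuclideanSpace ℝ (Fin n) → ℝ)
    (hrconv : StrictConvexOn ℝ Set.univ r) (hpconv : StrictConvexOn ℝ Set.univ p)
    (hrdiff : Differentiable ℝ r) (hpdiff : Differentiable ℝ p)
    (A : Matrix (Fin n) (Fin n) ℝ) (hA : IsUnit A.det)
    (B : Matrix (Fin n) (Fin m) ℝ)
    (M : Matrix (Fin n) (Fin n) ℝ) (hMsymm : M.IsSymm)
    (hrgradbij : Function.Bijective (gradient r))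
    (hrgradinv : ∀ v, gradient (fenchelConj r) (gradient r v) = v)
    (x : EuclideanSpace ℝ (Fin n))
    (ustar : EuclideanSpace ℝ (Fin m))
    (hmin : IsMinOn (fun u : EuclideanSpace ℝ (Fin m) =>
      r u + p ((WithLp.toLp 2 (A *ᵥ x + B *ᵥ u) : EuclideanSpace ℝ (Fin n)))) Set.univ ustar)
    (henv : Aᵀ *ᵥ (gradient p ((WithLp.toLp 2 (A *ᵥ x + B *ᵥ ustar) : EuclideanSpace ℝ (Fin n))) : EuclideanSpace ℝ (Fin n)) = (2 : ℝ) • (M *ᵥ x)) :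
    ustar = gradient (fenchelConj r) (WithLp.toLp 2 ((-2 : ℝ) • ((Bᵀ * (A⁻¹)ᵀ * M) *ᵥ x))) := by
  classical
  set y : EuclideanSpace ℝ (Fin n) := (WithLp.toLp 2 (A *ᵥ x + B *ᵥ ustar) : EuclideanSpace ℝ (Fin n)) with hy
  set w : EuclideanSpace ℝ (Fin n) := gradient p y with hw
  set Bclm : EuclideanSpace ℝ (Fin m) →L[ℝ] EuclideanSpace ℝ (Fin n) :=
    LinearMap.toContinuousLinearMap (Matrix.toEuclideanLin B) with hBclm
  set c : EuclideanSpace ℝ (Fin n) := (WithLp.equiv 2 (Fin n → ℝ)).symm (A *ᵥ x) with hc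
  set z : EuclideanSpace ℝ (Fin m) := (WithLp.equiv 2 (Fin m → ℝ)).symm
    (Bᵀ *ᵥ (WithLp.equiv 2 (Fin n → ℝ) w)) with hz
  have hg : ∀ u : EuclideanSpace ℝ (Fin m),
      HasFDerivAt (fun u : EuclideanSpace ℝ (Fin m) => c + Bclm u) Bclm u := by
    intro u
    exact Bclm.hasFDerivAt.const_add c
  have hF : HasFDerivAt (fun u : EuclideanSpace ℝ (Fin m) => r u + p (c + Bclm u))
      (fderiv ℝ r ustar + (fderiv ℝ p y).comp Bclm) ustar := by
    have hyeq : y = c + Bclm ustar := rfl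
    exact ((hrdiff ustar).hasFDerivAt).add
      ((hyeq ▸ (hpdiff y).hasFDerivAt).comp ustar (hg ustar))
  have hloc : IsLocalMin (fun u : EuclideanSpace ℝ (Fin m) => r u + p (c + Bclm u)) ustar := by
    have : IsMinOn (fun u : EuclideanSpace ℝ (Fin m) => r u + p (c + Bclm u)) Set.univ ustar :=
      hmin
    exact this.isLocalMin Filter.univ_mem
  have hder0 : fderiv ℝ r ustar + (fderiv ℝ p y).comp Bclm = 0 := by
    rw [← hF.fderiv]; exact hloc.fderiv_eq_zero
  have hrfd : ∀ v, fderiv ℝ r ustar v = ⟪gradient r ustar, v⟫ := by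
    intro v
    rw [((hrdiff ustar).hasGradientAt.hasFDerivAt).fderiv]
    simp [InnerProductSpace.toDual_apply_apply]
  have hpfd : ∀ v, fderiv ℝ p y v = ⟪w, v⟫ := by
    intro v
    rw [((hpdiff y).hasGradientAt.hasFDerivAt).fderiv]
    simp [InnerProductSpace.toDual_apply_apply, hw]
  have hadj : ∀ v : EuclideanSpace ℝ (Fin m), ⟪w, Bclm v⟫ = ⟪z, v⟫ := by
    intro v
    simp only [PiLp.inner_apply, RCLike.inner_apply, starRingEnd_apply, star_trivial]
    have h1 : ((WithLp.equiv 2 (Fin n → ℝ)) w) ⬝ᵥ (B *ᵥ (WithLp.equiv 2 (Fin m → ℝ) v))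
        = (Bᵀ *ᵥ (WithLp.equiv 2 (Fin n → ℝ) w)) ⬝ᵥ (WithLp.equiv 2 (Fin m → ℝ) v) := by
      rw [Matrix.dotProduct_mulVec, Matrix.mulVec_transpose]
    simpa [dotProduct, hz, hBclm, Matrix.toEuclideanLin_apply, mul_comm] using h1
  have hkey : ∀ v : EuclideanSpace ℝ (Fin m), ⟪gradient r ustar + z, v⟫ = 0 := by
    intro v
    have h0 : (fderiv ℝ r ustar + (fderiv ℝ p y).comp Bclm) v = 0 := by rw [hder0]; rfl
    simp only [ContinuousLinearMap.add_apply, ContinuousLinearMap.comp_apply] at h0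
    rw [hrfd, hpfd, hadj] at h0
    rw [inner_add_left]
    exact h0
  have hgr0 : gradient r ustar = -z := by
    have h := hkey (gradient r ustar + z)
    rw [inner_self_eq_zero] at h
    exact eq_neg_of_add_eq_zero_left h
  -- solve for w from henv
  have hAT : IsUnit (Aᵀ).det := by rwa [Matrix.det_transpose]
  have henv' : Aᵀ *ᵥ (WithLp.equiv 2 (Fin n → ℝ) w) = (2 : ℝ) • (M *ᵥ x) := henv
  have hwval : (WithLp.equiv 2 (Fin n → ℝ) w) = (Aᵀ)⁻¹ *ᵥ ((2 : ℝ) • (M *ᵥ x)) := by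
    have := congrArg (fun q : Fin n → ℝ => (Aᵀ)⁻¹ *ᵥ q) henv'
    simpa [Matrix.mulVec_mulVec, Matrix.nonsing_inv_mul _ hAT] using this
  have hBw : Bᵀ *ᵥ (WithLp.equiv 2 (Fin n → ℝ) w) = (-1 : ℝ) • ((-2 : ℝ) • ((Bᵀ * (A⁻¹)ᵀ * M) *ᵥ x)) := by
    rw [hwval, Matrix.mulVec_smul, Matrix.mulVec_mulVec, Matrix.mulVec_smul,
      Matrix.mulVec_mulVec, Matrix.transpose_nonsing_inv, ← Matrix.mul_assoc, smul_smul]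
    norm_num
  rw [show ustar = gradient (fenchelConj r) (gradient r ustar) from (hrgradinv ustar).symm]
  congr 1
  rw [hgr0]
  have hfun : -(Bᵀ *ᵥ (WithLp.equiv 2 (Fin n → ℝ) w)) = (-2 : ℝ) • ((Bᵀ * (A⁻¹)ᵀ * M) *ᵥ x : Fin m → ℝ) := by
    rw [hBw]; simp
  exact congrArg (WithLp.toLp 2) hfun
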